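/- Let F₁(r) = P(χ²_k ≥ r τ_λ²) and F₂(r) = P(k F_{k,λ} ≥ r), where χ²_k is Chi-squared with k degrees of freedom, F_{k,λ} is an F random variable with (k, λ) degrees of freedom, and τ_λ² = (2/λ) Γ^{2/k}((k+λ)/2)/Γ^{2/k}(λ/2). Then F₂(r) ≥ F₁(r) for all r ≥ 0, i.e., the scaled chi-square tail is dominated by the scaled F tail. -/

import Mathlib

open MeasureTheory Real Set

/-- Chi-squared(k) density. -/
noncomputable def chiPdf (k : ℕ) (u : ℝ) : ℝ :=
  if 0 < u then u ^ ((k : ℝ) / 2 - 1) * Real.exp (-u / 2) /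
    (2 ^ ((k : ℝ) / 2) * Real.Gamma ((k : ℝ) / 2)) else 0

/-- Density of `k·F_{k,λ}`. -/
noncomputable def kFPdf (k : ℕ) (l u : ℝ) : ℝ :=
  if 0 < u then
    (Real.Gamma (((k : ℝ) + l) / 2) / (Real.Gamma ((k : ℝ) / 2) * Real.Gamma (l / 2))) *
      l ^ (-((k : ℝ) / 2)) * u ^ ((k : ℝ) / 2 - 1) * (1 + u / l) ^ (-(((k : ℝ) + l) / 2))
  else 0

/-- `τ_λ² = (2/λ) Γ^{2/k}((k+λ)/2)/Γ^{2/k}(λ/2)`. -/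
noncomputable def tauSq (k : ℕ) (l : ℝ) : ℝ :=
  (2 / l) * Real.Gamma (((k : ℝ) + l) / 2) ^ (2 / (k : ℝ)) /
    Real.Gamma (l / 2) ^ (2 / (k : ℝ))

private lemma aux_log {l x y : ℝ} (hl : 0 < l) (hx : 0 < x) (hxy : x ≤ y) :
    x * Real.log (1 + y / l) ≤ y * Real.log (1 + x / l) := by
  have hy : 0 < y := lt_of_lt_of_le hx hxy
  have h1 : (1:ℝ) ∈ Ioi (0:ℝ) := by norm_num
  have h2 : (1:ℝ) + y / l ∈ Ioi (0:ℝ) := by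
    have : 0 < y / l := div_pos hy hl
    simp only [mem_Ioi]; linarith
  have hw1 : (0:ℝ) ≤ 1 - x / y := by
    have : x / y ≤ 1 := (div_le_one hy).2 hxy
    linarith
  have hw2 : (0:ℝ) ≤ x / y := le_of_lt (div_pos hx hy)
  have hsum : (1 - x / y) + x / y = 1 := by ring
  have hc := strictConcaveOn_log_Ioi.concaveOn.2 h1 h2 hw1 hw2 hsum
  simp only [smul_eq_mul, mul_one, Real.log_one, mul_zero, zero_add] at hc
  have heq : 1 - x / y + x / y * (1 + y / l) = 1 + x / l := by
    field_simp
    ring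
  rw [heq] at hc
  have h3 := mul_le_mul_of_nonneg_left hc (le_of_lt hy)
  calc x * Real.log (1 + y / l) = y * (x / y * Real.log (1 + y / l)) := by
        field_simp
    _ ≤ y * Real.log (1 + x / l) := h3

private lemma aux_beta {a b : ℝ} (ha : 0 < a) (hb : 0 < b) :
    ∫ t in Ioo (0:ℝ) 1, t ^ (a - 1) * (1 - t) ^ (b - 1) =
      Real.Gamma a * Real.Gamma b / Real.Gamma (a + b) := by
  have hab : 0 < Real.Gamma (a + b) := Real.Gamma_pos_of_pos (by linarith)
  have key := Complex.Gamma_mul_Gamma_eq_betaIntegral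
      (s := (a:ℂ)) (t := (b:ℂ)) (by simpa using ha) (by simpa using hb)
  have hbeta : Complex.betaIntegral (a:ℂ) (b:ℂ) =
      ((∫ t in Ioo (0:ℝ) 1, t ^ (a - 1) * (1 - t) ^ (b - 1) : ℝ) : ℂ) := by
    rw [Complex.betaIntegral, intervalIntegral.integral_of_le zero_le_one,
      MeasureTheory.integral_Ioc_eq_integral_Ioo]
    rw [show (∫ x in Ioo (0:ℝ) 1, (x:ℂ) ^ ((a:ℂ) - 1) * (1 - (x:ℂ)) ^ ((b:ℂ) - 1)) =
        ∫ x in Ioo (0:ℝ) 1, ((x ^ (a - 1) * (1 - x) ^ (b - 1) : ℝ) : ℂ) from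
      setIntegral_congr_fun measurableSet_Ioo (fun x hx => by
        obtain ⟨hx0, hx1⟩ := hx
        rw [Complex.ofReal_mul, Complex.ofReal_cpow hx0.le,
          Complex.ofReal_cpow (by linarith : (0:ℝ) ≤ 1 - x)]
        push_cast
        ring)]
    exact integral_ofReal
  rw [hbeta, ← Complex.ofReal_add, Complex.Gamma_ofReal, Complex.Gamma_ofReal,
    Complex.Gamma_ofReal, ← Complex.ofReal_mul, ← Complex.ofReal_mul] at key
  have key' := Complex.ofReal_inj.mp key
  field_simp
  linarith [key']

private lemma aux_beta_integrable {a b : ℝ} (ha : 0 < a) (hb : 0 < b) :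
    IntegrableOn (fun t : ℝ => t ^ (a - 1) * (1 - t) ^ (b - 1)) (Ioo 0 1) := by
  have h := Complex.betaIntegral_convergent (u := (a:ℂ)) (v := (b:ℂ))
      (by simpa using ha) (by simpa using hb)
  rw [intervalIntegrable_iff_integrableOn_Ioo_of_le zero_le_one] at h
  have h2 := h.re
  refine IntegrableOn.congr_fun h2 (fun x hx => ?_) measurableSet_Ioo
  obtain ⟨hx0, hx1⟩ := hx
  have : (x:ℂ) ^ ((a:ℂ) - 1) * (1 - (x:ℂ)) ^ ((b:ℂ) - 1)
      = ((x ^ (a - 1) * (1 - x) ^ (b - 1) : ℝ) : ℂ) := by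
    rw [Complex.ofReal_mul, Complex.ofReal_cpow hx0.le,
      Complex.ofReal_cpow (by linarith : (0:ℝ) ≤ 1 - x)]
    push_cast
    ring
  simp [this]

private lemma chi_facts (k : ℕ) (hk : 0 < k) :
    (∫ u in Ioi (0:ℝ), chiPdf k u = 1) ∧ IntegrableOn (chiPdf k) (Ioi 0) := by
  have hk' : (0:ℝ) < (k:ℝ)/2 := by positivity
  set a := (k:ℝ)/2 with ha_def
  have hga : 0 < Real.Gamma a := Real.Gamma_pos_of_pos hk'
  have h2a : (0:ℝ) < 2 ^ a := rpow_pos_of_pos two_pos a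
  have heq : EqOn (fun u : ℝ => (2 ^ a * Real.Gamma a)⁻¹ * (u ^ (a-1) * Real.exp (-(1/2) * u ^ (1:ℝ))))
      (chiPdf k) (Ioi 0) := by
    intro u hu
    simp only [chiPdf, if_pos (mem_Ioi.mp hu), ← ha_def]
    rw [Real.rpow_one]
    rw [show -(1/2) * u = -u/2 by ring]
    field_simp
  have hint0 : IntegrableOn (fun u : ℝ => u ^ (a-1) * Real.exp (-(1/2) * u ^ (1:ℝ))) (Ioi 0) :=
    integrableOn_rpow_mul_exp_neg_mul_rpow (by linarith) one_pos (by norm_num)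
  constructor
  · rw [← setIntegral_congr_fun measurableSet_Ioi heq, MeasureTheory.integral_const_mul,
      integral_rpow_mul_exp_neg_mul_rpow one_pos (by linarith : (-1:ℝ) < a - 1) (by norm_num : (0:ℝ) < 1/2)]
    rw [sub_add_cancel, div_one, div_one, one_div, Real.inv_rpow (by norm_num : (0:ℝ) ≤ 2),
      Real.rpow_neg (by norm_num : (0:ℝ) ≤ 2), inv_inv]
    field_simp
  · exact IntegrableOn.congr_fun (hint0.const_mul _) heq measurableSet_Ioi

private lemma kF_facts (k : ℕ) (hk : 0 < k) (l : ℝ) (hl : 0 < l) :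
    (∫ u in Ioi (0:ℝ), kFPdf k l u = 1) ∧ IntegrableOn (kFPdf k l) (Ioi 0) := by
  have hk' : (0:ℝ) < (k:ℝ)/2 := by positivity
  set a := (k:ℝ)/2 with ha_def
  set b := l/2 with hb_def
  have hb' : 0 < b := by positivity
  have hc' : ((k:ℝ) + l)/2 = a + b := by rw [ha_def, hb_def]; ring
  have hga : 0 < Real.Gamma a := Real.Gamma_pos_of_pos hk'
  have hgb : 0 < Real.Gamma b := Real.Gamma_pos_of_pos hb'
  have hgc : 0 < Real.Gamma (a + b) := Real.Gamma_pos_of_pos (by linarith)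
  set CC := Real.Gamma (((k:ℝ) + l) / 2) / (Real.Gamma ((k:ℝ) / 2) * Real.Gamma (l / 2)) *
      l ^ (-((k:ℝ) / 2)) with hCC_def
  -- change of variables setup
  set g : ℝ → ℝ := fun t => l * t / (1 - t) with hg_def
  have hderiv : ∀ t ∈ Ioo (0:ℝ) 1, HasDerivWithinAt g (l / (1 - t) ^ 2) (Ioo 0 1) t := by
    intro t ht
    have h1 : (1:ℝ) - t ≠ 0 := by have := ht.2; intro h; simp only [sub_eq_zero] at h; linarith
    have h2 : HasDerivAt (fun t : ℝ => 1 - t) (-1) t := by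
      simpa using (hasDerivAt_id t).const_sub 1
    have h3 : HasDerivAt (fun t : ℝ => l * t) l t := by
      simpa using (hasDerivAt_id t).const_mul l
    have h4 := h3.div h2 h1
    have h5 : (l * (1 - t) - l * t * -1) / (1 - t) ^ 2 = l / (1 - t) ^ 2 := by
      congr 1; ring
    rw [h5] at h4
    exact h4.hasDerivWithinAt
  have hinj : InjOn g (Ioo 0 1) := by
    intro s hs t ht h
    have hs1 : (1:ℝ) - s ≠ 0 := by have := hs.2; intro hh; simp only [sub_eq_zero] at hh; linarith
    have ht1 : (1:ℝ) - t ≠ 0 := by have := ht.2; intro hh; simp only [sub_eq_zero] at hh; linarith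
    simp only [hg_def] at h
    field_simp at h
    have h2 : l * s = l * t := by rw [show s = t by linarith [h]]
    exact mul_left_cancel₀ (ne_of_gt hl) h2
  have himg : g '' Ioo 0 1 = Ioi 0 := by
    ext u
    constructor
    · rintro ⟨t, ⟨ht0, ht1⟩, rfl⟩
      simp only [hg_def, mem_Ioi]
      exact div_pos (mul_pos hl ht0) (by linarith)
    · intro hu
      simp only [mem_Ioi] at hu
      refine ⟨u / (u + l), ⟨div_pos hu (by linarith), ?_⟩, ?_⟩
      · rw [div_lt_one (by linarith)]; linarith
      · have h1 : u + l ≠ 0 := by positivity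
        simp only [hg_def]
        rw [eq_comm]
        field_simp
        rw [add_sub_cancel_left, div_self hl.ne']
  have hEq : ∀ t ∈ Ioo (0:ℝ) 1, |l / (1 - t) ^ 2| • kFPdf k l (g t)
      = (CC * l ^ a) * (t ^ (a - 1) * (1 - t) ^ (b - 1)) := by
    intro t ht
    obtain ⟨ht0, ht1⟩ := ht
    have homt : (0:ℝ) < 1 - t := by linarith
    have hgt : 0 < g t := by
      simp only [hg_def]; exact div_pos (mul_pos hl ht0) homt
    have e1 : (1 : ℝ) + g t / l = (1 - t)⁻¹ := by
      simp only [hg_def]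
      field_simp
      ring
    have e2 : g t ^ (a - 1) = l ^ (a - 1) * t ^ (a - 1) * ((1 - t) ^ (a - 1))⁻¹ := by
      simp only [hg_def]
      rw [div_rpow (by positivity) homt.le, mul_rpow hl.le ht0.le, div_eq_mul_inv]
    have e3 : ((1 - t)⁻¹) ^ (-(((k:ℝ) + l) / 2)) = (1 - t) ^ (a + b) := by
      rw [Real.inv_rpow homt.le, Real.rpow_neg homt.le, inv_inv, hc']
    have e4 : (1 - t) ^ (a + b) = (1 - t) ^ (a - 1) * (1 - t) ^ (b - 1) * (1 - t) ^ (2:ℝ) := by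
      rw [← Real.rpow_add homt, ← Real.rpow_add homt]
      congr 1
      ring
    have habs : |l / (1 - t) ^ 2| = l / (1 - t) ^ (2:ℝ) := by
      rw [abs_of_pos (by positivity), Real.rpow_two]
    have hkf : kFPdf k l (g t) = CC * (g t) ^ (a - 1) * (1 + g t / l) ^ (-(((k:ℝ) + l) / 2)) := by
      rw [kFPdf, if_pos hgt, hCC_def]
    rw [smul_eq_mul, hkf, e1, e2, e3, e4, habs]
    have hrp1 : (0:ℝ) < (1 - t) ^ (a - 1) := rpow_pos_of_pos homt _
    have hrp2 : (0:ℝ) < (1 - t) ^ (2:ℝ) := rpow_pos_of_pos homt _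
    have hrp3 : (0:ℝ) < l ^ a := rpow_pos_of_pos hl _
    have hla : l ^ (a - 1) = l ^ a / l := by
      rw [Real.rpow_sub hl, Real.rpow_one]
    rw [hla]
    field_simp
  have hchg := integral_image_eq_integral_abs_deriv_smul measurableSet_Ioo hderiv hinj (kFPdf k l)
  rw [himg] at hchg
  have hbint := aux_beta_integrable hk' hb'
  constructor
  · rw [hchg, setIntegral_congr_fun measurableSet_Ioo hEq, MeasureTheory.integral_const_mul,
      aux_beta hk' hb']
    rw [hCC_def, hc']
    rw [show l ^ (-((k:ℝ)/2)) = (l ^ a)⁻¹ by rw [← ha_def, Real.rpow_neg hl.le]]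
    have hrp3 : (0:ℝ) < l ^ a := rpow_pos_of_pos hl _
    rw [← ha_def, ← hb_def]
    field_simp
  · have := (integrableOn_image_iff_integrableOn_abs_deriv_smul measurableSet_Ioo hderiv hinj
      (kFPdf k l))
    rw [himg] at this
    rw [this]
    exact IntegrableOn.congr_fun (hbint.const_mul (CC * l ^ a)) (fun t ht => (hEq t ht).symm)
      measurableSet_Ioo

/-- With `F₁(r) = P(χ²_k ≥ r τ_λ²)` and `F₂(r) = P(k F_{k,λ} ≥ r)`,
one has `F₁(r) ≤ F₂(r)` for all `r ≥ 0`. -/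
theorem stmt18 (k : ℕ) (hk : 0 < k) (l : ℝ) (hl : 0 < l) :
    ∀ r : ℝ, 0 ≤ r →
      (∫ u in Set.Ici (r * tauSq k l), chiPdf k u) ≤ ∫ u in Set.Ici r, kFPdf k l u := by
  intro r hr
  obtain ⟨hkF_val, hkF_int⟩ := kF_facts k hk l hl
  obtain ⟨hchi_val, hchi_int⟩ := chi_facts k hk
  have hk0 : (0:ℝ) < (k:ℝ) := by exact_mod_cast hk
  have hk' : (0:ℝ) < (k:ℝ)/2 := by positivity
  set a := (k:ℝ)/2 with ha_def
  set c := ((k:ℝ) + l)/2 with hc_def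
  have hcpos : 0 < c := by rw [hc_def]; positivity
  have hga : 0 < Real.Gamma a := Real.Gamma_pos_of_pos hk'
  have hgb : 0 < Real.Gamma (l/2) := Real.Gamma_pos_of_pos (by positivity)
  have hgc : 0 < Real.Gamma c := Real.Gamma_pos_of_pos hcpos
  set τ := tauSq k l with hτ_def
  have hτ : 0 < τ := by
    rw [hτ_def, tauSq]
    have h1 : (0:ℝ) < Real.Gamma (((k:ℝ) + l)/2) ^ (2/(k:ℝ)) := rpow_pos_of_pos hgc _
    have h2 : (0:ℝ) < Real.Gamma (l/2) ^ (2/(k:ℝ)) := rpow_pos_of_pos hgb _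
    positivity
  set φ := fun u : ℝ => τ * chiPdf k (τ * u) with hφ_def
  -- change of variables for the chi integral
  have hCoV : ∀ s : ℝ, ∫ u in Ioi s, φ u = ∫ u in Ioi (τ * s), chiPdf k u := by
    intro s
    simp only [hφ_def]
    rw [MeasureTheory.integral_const_mul, integral_comp_mul_left_Ioi (chiPdf k) s hτ,
      smul_eq_mul, ← mul_assoc, mul_inv_cancel₀ (ne_of_gt hτ), one_mul]
  have hφint : IntegrableOn φ (Ioi 0) := by
    have h1 : IntegrableOn (fun x => chiPdf k (τ * x)) (Ioi 0) := by
      rw [integrableOn_Ioi_comp_mul_left_iff (chiPdf k) 0 hτ, mul_zero]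
      exact hchi_int
    exact h1.const_mul τ
  have hφ_val : ∫ u in Ioi 0, φ u = 1 := by rw [hCoV 0, mul_zero, hchi_val]
  have hLHS : ∫ u in Ici (r * τ), chiPdf k u = ∫ u in Ioi r, φ u := by
    rw [integral_Ici_eq_integral_Ioi, hCoV r, mul_comm]
  rw [hLHS, integral_Ici_eq_integral_Ioi]
  -- pointwise formulas
  set CC := Real.Gamma c / (Real.Gamma a * Real.Gamma (l/2)) * l ^ (-a) with hCC_def
  have hCC : 0 ≤ CC := le_of_lt (mul_pos (div_pos hgc (mul_pos hga hgb)) (rpow_pos_of_pos hl _))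
  have tau_pow : τ ^ a = (2/l) ^ a * (Real.Gamma c / Real.Gamma (l/2)) := by
    rw [hτ_def, tauSq, ← hc_def, div_rpow (by positivity) (rpow_nonneg hgb.le _),
      mul_rpow (by positivity) (rpow_nonneg hgc.le _)]
    have h1 : (Real.Gamma c ^ (2/(k:ℝ))) ^ a = Real.Gamma c := by
      rw [← Real.rpow_mul hgc.le, show (2/(k:ℝ)) * a = 1 by rw [ha_def]; field_simp,
        Real.rpow_one]
    have h2 : (Real.Gamma (l/2) ^ (2/(k:ℝ))) ^ a = Real.Gamma (l/2) := by
      rw [← Real.rpow_mul hgb.le, show (2/(k:ℝ)) * a = 1 by rw [ha_def]; field_simp,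
        Real.rpow_one]
    rw [h1, h2, mul_div_assoc]
  have hφ_eq : ∀ u : ℝ, 0 < u → φ u = CC * (u ^ (a - 1) * Real.exp (-(u * τ) / 2)) := by
    intro u hu
    have hτu : 0 < τ * u := mul_pos hτ hu
    simp only [hφ_def, chiPdf, if_pos hτu, ← ha_def]
    rw [mul_rpow hτ.le hu.le]
    have h2a : (0:ℝ) < 2 ^ a := rpow_pos_of_pos two_pos a
    have hτa : τ * τ ^ (a - 1) = τ ^ a := by
      rw [Real.rpow_sub hτ, Real.rpow_one]
      field_simp
    have harg : -(τ * u) / 2 = -(u * τ) / 2 := by ring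
    rw [harg]
    have key : τ ^ a / (2 ^ a * Real.Gamma a) = CC := by
      rw [tau_pow, hCC_def, div_rpow (by norm_num) hl.le, Real.rpow_neg hl.le]
      field_simp
    calc τ * (τ ^ (a-1) * u ^ (a-1) * Real.exp (-(u * τ)/2) / (2 ^ a * Real.Gamma a))
        = (τ ^ a / (2 ^ a * Real.Gamma a)) * (u ^ (a-1) * Real.exp (-(u * τ)/2)) := by
          rw [← hτa]; ring
      _ = CC * (u ^ (a-1) * Real.exp (-(u * τ)/2)) := by rw [key]
  have hψ_eq : ∀ u : ℝ, 0 < u →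
      kFPdf k l u = CC * (u ^ (a - 1) * Real.exp (-(c * Real.log (1 + u / l)))) := by
    intro u hu
    have h1ul : (0:ℝ) < 1 + u / l := by positivity
    simp only [kFPdf, if_pos hu, ← ha_def, ← hc_def, ← hCC_def]
    rw [Real.rpow_def_of_pos h1ul]
    ring_nf
  -- the two cases
  rcases le_or_gt (c * Real.log (1 + r / l)) (r * τ / 2) with hG | hG
  · -- φ ≤ ψ on Ioi r ; but if r = 0 both integrals are 1
    rcases eq_or_lt_of_le hr with hr0 | hr'
    · rw [← hr0, hφ_val, hkF_val]
    · apply setIntegral_mono_on (hφint.mono_set (Ioi_subset_Ioi hr))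
        (hkF_int.mono_set (Ioi_subset_Ioi hr)) measurableSet_Ioi
      intro u hu
      have hu0 : 0 < u := lt_trans hr' hu
      rw [hφ_eq u hu0, hψ_eq u hu0]
      apply mul_le_mul_of_nonneg_left _ hCC
      apply mul_le_mul_of_nonneg_left _ (rpow_nonneg hu0.le _)
      rw [Real.exp_le_exp]
      have hlog := aux_log hl hr' (le_of_lt hu)
      nlinarith [mul_le_mul_of_nonneg_left hlog hcpos.le,
        mul_le_mul_of_nonneg_left hG hu0.le, mul_pos hr' hu0]
  · -- ψ ≤ φ on Ioc 0 r
    have hr' : 0 < r := by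
      by_contra h
      push_neg at h
      have : r = 0 := le_antisymm h hr
      rw [this] at hG
      simp at hG
    have hIoc : ∫ u in Ioc 0 r, kFPdf k l u ≤ ∫ u in Ioc 0 r, φ u := by
      apply setIntegral_mono_on (hkF_int.mono_set Ioc_subset_Ioi_self)
        (hφint.mono_set Ioc_subset_Ioi_self) measurableSet_Ioc
      intro u hu
      obtain ⟨hu0, hur⟩ := hu
      rw [hφ_eq u hu0, hψ_eq u hu0]
      apply mul_le_mul_of_nonneg_left _ hCC
      apply mul_le_mul_of_nonneg_left _ (rpow_nonneg hu0.le _)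
      rw [Real.exp_le_exp]
      have hlog := aux_log hl hu0 hur
      nlinarith [mul_le_mul_of_nonneg_left hlog hcpos.le,
        mul_le_mul_of_nonneg_left hG.le hu0.le, mul_pos hr' hu0]
    have hdisj : Disjoint (Ioc (0:ℝ) r) (Ioi r) := Ioc_disjoint_Ioi le_rfl
    have hsplitφ := setIntegral_union (f := φ) (μ := volume) hdisj measurableSet_Ioi
      (hφint.mono_set Ioc_subset_Ioi_self) (hφint.mono_set (Ioi_subset_Ioi hr'.le))
    rw [Ioc_union_Ioi_eq_Ioi hr'.le, hφ_val] at hsplitφ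
    have hsplitψ := setIntegral_union (f := kFPdf k l) (μ := volume) hdisj measurableSet_Ioi
      (hkF_int.mono_set Ioc_subset_Ioi_self) (hkF_int.mono_set (Ioi_subset_Ioi hr'.le))
    rw [Ioc_union_Ioi_eq_Ioi hr'.le, hkF_val] at hsplitψ
    linarith
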